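/- arXiv:2211.15366 — 4 statements merged into one kernel-verified Lean document; each statement's English description precedes it below -/
import Mathlib

section
/- Let n ∈ ℕ and A ∈ ℕ, and let G and G' be simple graphs on the same vertex set of n vertices that are A-edge-adjacent. Then for every index i ∈ {1, …, n}, the i-th smallest eigenvalues of their Laplacians satisfy |λ_i(G) − λ_i(G')| ≤ 2A. -/
open Matrix Finset
open scoped RealInnerProductSpace

set_option linter.unusedSectionVars false

/-- The eigenvalues of the Laplacian matrix of a finite simple graph,
listed in nondecreasing order. -/
noncomputable def sortedLapEigs {V : Type*} [Fintype V] [DecidableEq V]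
    (G : SimpleGraph V) [DecidableRel G.Adj] : Fin (Fintype.card V) → ℝ :=
  let f : Fin (Fintype.card V) → ℝ :=
    (SimpleGraph.posSemidef_lapMatrix (R := ℝ) G).isHermitian.eigenvalues ∘
      (Fintype.equivFin V).symm
  f ∘ Tuple.sort f

variable {V : Type*} [Fintype V] [DecidableEq V]

lemma rayleigh_le {M : Matrix V V ℝ} (hM : M.IsHermitian) (S : Set V) (c : ℝ)
    (hc : ∀ j ∈ S, hM.eigenvalues j ≤ c) (x : EuclideanSpace ℝ V)
    (hx : x ∈ Submodule.span ℝ (⇑hM.eigenvectorBasis '' S)) :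
    ⟪x, (WithLp.toLp 2 (M *ᵥ x) : EuclideanSpace ℝ V)⟫ ≤ c * ‖x‖ ^ 2 := by
  set b := hM.eigenvectorBasis with hb
  have hsupp : ∀ j ∉ S, b.repr x j = 0 := by
    intro j hj
    have h2 : ↑(b.toBasis.repr x).support ⊆ S :=
      (b.toBasis.mem_span_image).mp (by rwa [b.coe_toBasis])
    have h3 : b.toBasis.repr x j = 0 := by
      by_contra h
      exact hj (h2 (Finsupp.mem_support_iff.mpr h))
    simpa [b.coe_toBasis_repr_apply] using h3
  have hsym : Mᵀ = M := by
    rw [← Matrix.conjTranspose_eq_transpose_of_trivial]; exact hM.eq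
  have hrep : ∀ j, b.repr ((WithLp.toLp 2 (M *ᵥ x) : EuclideanSpace ℝ V)) j
      = hM.eigenvalues j * b.repr x j := by
    intro j
    rw [b.repr_apply_apply, b.repr_apply_apply]
    simp only [PiLp.inner_apply, RCLike.inner_apply, conj_trivial]
    conv_lhs => enter [2, k]; rw [mul_comm]
    conv_rhs => enter [2, 2, k]; rw [mul_comm]
    calc ∑ k, (b j) k * (M *ᵥ x) k
        = ⇑(b j) ⬝ᵥ (M *ᵥ x) := rfl
      _ = (⇑(b j) ᵥ* M) ⬝ᵥ x := dotProduct_mulVec _ _ _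
      _ = (Mᵀ *ᵥ ⇑(b j)) ⬝ᵥ x := by rw [mulVec_transpose]
      _ = (M *ᵥ ⇑(b j)) ⬝ᵥ x := by rw [hsym]
      _ = (hM.eigenvalues j • ⇑(b j)) ⬝ᵥ x := by rw [hM.mulVec_eigenvectorBasis]
      _ = hM.eigenvalues j * (⇑(b j) ⬝ᵥ x) := smul_dotProduct _ _ _
      _ = hM.eigenvalues j * ∑ k, (b j) k * x k := rfl
  have hinner : ⟪x, (WithLp.toLp 2 (M *ᵥ x) : EuclideanSpace ℝ V)⟫
      = ∑ j, hM.eigenvalues j * (b.repr x j) ^ 2 := by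
    rw [← b.repr.inner_map_map x (WithLp.toLp 2 (M *ᵥ x) : EuclideanSpace ℝ V)]
    simp only [PiLp.inner_apply, RCLike.inner_apply, conj_trivial]
    refine Finset.sum_congr rfl fun j _ => ?_
    rw [hrep j]; ring
  have hnorm : ‖x‖ ^ 2 = ∑ j, (b.repr x j) ^ 2 := by
    rw [← b.repr.norm_map x, ← real_inner_self_eq_norm_sq]
    simp only [PiLp.inner_apply, RCLike.inner_apply, conj_trivial, sq]
  rw [hinner, hnorm, Finset.mul_sum]
  refine Finset.sum_le_sum fun j _ => ?_
  by_cases hj : j ∈ S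
  · exact mul_le_mul_of_nonneg_right (hc j hj) (sq_nonneg _)
  · simp [hsupp j hj]

lemma rayleigh_ge {M : Matrix V V ℝ} (hM : M.IsHermitian) (S : Set V) (c : ℝ)
    (hc : ∀ j ∈ S, c ≤ hM.eigenvalues j) (x : EuclideanSpace ℝ V)
    (hx : x ∈ Submodule.span ℝ (⇑hM.eigenvectorBasis '' S)) :
    c * ‖x‖ ^ 2 ≤ ⟪x, (WithLp.toLp 2 (M *ᵥ x) : EuclideanSpace ℝ V)⟫ := by
  set b := hM.eigenvectorBasis with hb
  have hsupp : ∀ j ∉ S, b.repr x j = 0 := by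
    intro j hj
    have h2 : ↑(b.toBasis.repr x).support ⊆ S :=
      (b.toBasis.mem_span_image).mp (by rwa [b.coe_toBasis])
    have h3 : b.toBasis.repr x j = 0 := by
      by_contra h
      exact hj (h2 (Finsupp.mem_support_iff.mpr h))
    simpa [b.coe_toBasis_repr_apply] using h3
  have hsym : Mᵀ = M := by
    rw [← Matrix.conjTranspose_eq_transpose_of_trivial]; exact hM.eq
  have hrep : ∀ j, b.repr ((WithLp.toLp 2 (M *ᵥ x) : EuclideanSpace ℝ V)) j
      = hM.eigenvalues j * b.repr x j := by
    intro j
    rw [b.repr_apply_apply, b.repr_apply_apply]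
    simp only [PiLp.inner_apply, RCLike.inner_apply, conj_trivial]
    conv_lhs => enter [2, k]; rw [mul_comm]
    conv_rhs => enter [2, 2, k]; rw [mul_comm]
    calc ∑ k, (b j) k * (M *ᵥ x) k
        = ⇑(b j) ⬝ᵥ (M *ᵥ x) := rfl
      _ = (⇑(b j) ᵥ* M) ⬝ᵥ x := dotProduct_mulVec _ _ _
      _ = (Mᵀ *ᵥ ⇑(b j)) ⬝ᵥ x := by rw [mulVec_transpose]
      _ = (M *ᵥ ⇑(b j)) ⬝ᵥ x := by rw [hsym]
      _ = (hM.eigenvalues j • ⇑(b j)) ⬝ᵥ x := by rw [hM.mulVec_eigenvectorBasis]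
      _ = hM.eigenvalues j * (⇑(b j) ⬝ᵥ x) := smul_dotProduct _ _ _
      _ = hM.eigenvalues j * ∑ k, (b j) k * x k := rfl
  have hinner : ⟪x, (WithLp.toLp 2 (M *ᵥ x) : EuclideanSpace ℝ V)⟫
      = ∑ j, hM.eigenvalues j * (b.repr x j) ^ 2 := by
    rw [← b.repr.inner_map_map x (WithLp.toLp 2 (M *ᵥ x) : EuclideanSpace ℝ V)]
    simp only [PiLp.inner_apply, RCLike.inner_apply, conj_trivial]
    refine Finset.sum_congr rfl fun j _ => ?_
    rw [hrep j]; ring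
  have hnorm : ‖x‖ ^ 2 = ∑ j, (b.repr x j) ^ 2 := by
    rw [← b.repr.norm_map x, ← real_inner_self_eq_norm_sq]
    simp only [PiLp.inner_apply, RCLike.inner_apply, conj_trivial, sq]
  rw [hinner, hnorm, Finset.mul_sum]
  refine Finset.sum_le_sum fun j _ => ?_
  by_cases hj : j ∈ S
  · exact mul_le_mul_of_nonneg_right (hc j hj) (sq_nonneg _)
  · simp [hsupp j hj]



variable {V : Type*} [Fintype V] [DecidableEq V]

lemma finrank_span_onb {E : Type*} [NormedAddCommGroup E] [InnerProductSpace ℝ E]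
    (b : OrthonormalBasis V ℝ E) (S : Finset V) :
    Module.finrank ℝ (Submodule.span ℝ (⇑b '' (S : Set V))) = S.card := by
  have li : LinearIndependent ℝ (fun j : (S : Set V) => b j) :=
    (b.orthonormal.comp _ Subtype.val_injective).linearIndependent
  have hr : Set.range (fun j : (S : Set V) => b j) = ⇑b '' (S : Set V) := by
    rw [← Set.image_eq_range]
  rw [← hr, finrank_span_eq_card li]
  simp

/-- A sorted-eigenvalue function matching `sortedLapEigs`. -/
noncomputable def sortedEig {M : Matrix V V ℝ} (hM : M.IsHermitian) :
    Fin (Fintype.card V) → ℝ :=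
  let f : Fin (Fintype.card V) → ℝ := hM.eigenvalues ∘ (Fintype.equivFin V).symm
  f ∘ Tuple.sort f

lemma weyl_one_side {M M' : Matrix V V ℝ} (hM : M.IsHermitian) (hM' : M'.IsHermitian)
    (c : ℝ)
    (hc : ∀ x : EuclideanSpace ℝ V,
      ⟪x, (WithLp.toLp 2 (M' *ᵥ x) : EuclideanSpace ℝ V)⟫ ≤ ⟪x, (WithLp.toLp 2 (M *ᵥ x) : EuclideanSpace ℝ V)⟫ + c * ‖x‖ ^ 2)
    (i : Fin (Fintype.card V)) :
    sortedEig hM' i ≤ sortedEig hM i + c := by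
  classical
  set e := (Fintype.equivFin V).symm with he
  set f : Fin (Fintype.card V) → ℝ := hM.eigenvalues ∘ e with hf
  set f' : Fin (Fintype.card V) → ℝ := hM'.eigenvalues ∘ e with hf'
  set σ := Tuple.sort f with hσ
  set σ' := Tuple.sort f' with hσ'
  have hmono : Monotone (f ∘ σ) := Tuple.monotone_sort f
  have hmono' : Monotone (f' ∘ σ') := Tuple.monotone_sort f'
  set ι : Fin (Fintype.card V) → V := fun j => e (σ j) with hι
  set ι' : Fin (Fintype.card V) → V := fun j => e (σ' j) with hι'
  have hιinj : Function.Injective ι := e.injective.comp σ.injective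
  have hι'inj : Function.Injective ι' := e.injective.comp σ'.injective
  set S : Finset V := (Finset.Iic i).image ι with hS
  set S' : Finset V := (Finset.Ici i).image ι' with hS'
  set U := Submodule.span ℝ (⇑hM.eigenvectorBasis '' (S : Set V)) with hU
  set U' := Submodule.span ℝ (⇑hM'.eigenvectorBasis '' (S' : Set V)) with hU'
  have hrU : Module.finrank ℝ U = i + 1 := by
    rw [hU, finrank_span_onb, hS, Finset.card_image_of_injective _ hιinj, Fin.card_Iic]
  have hrU' : Module.finrank ℝ U' = Fintype.card V - i := by
    rw [hU', finrank_span_onb, hS', Finset.card_image_of_injective _ hι'inj, Fin.card_Ici]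
  have hsum : Module.finrank ℝ U + Module.finrank ℝ U' = Fintype.card V + 1 := by
    rw [hrU, hrU']
    have := i.isLt
    omega
  have hinf : 0 < Module.finrank ℝ ↥(U ⊓ U') := by
    have h1 := Submodule.finrank_sup_add_finrank_inf_eq U U'
    have h2 : Module.finrank ℝ ↥(U ⊔ U') ≤ Fintype.card V := by
      have := Submodule.finrank_le (U ⊔ U')
      rwa [finrank_euclideanSpace] at this
    omega
  have : Nontrivial ↥(U ⊓ U') := Module.nontrivial_of_finrank_pos hinf
  obtain ⟨x, hxmem, hx0⟩ := (Submodule.ne_bot_iff _).mp (Submodule.nontrivial_iff_ne_bot.mp this)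
  rw [Submodule.mem_inf] at hxmem
  obtain ⟨hxU, hxU'⟩ := hxmem
  have hse : sortedEig hM = f ∘ σ := rfl
  have hse' : sortedEig hM' = f' ∘ σ' := rfl
  have hbS : ∀ j ∈ (S : Set V), hM.eigenvalues j ≤ sortedEig hM i := by
    intro j hj
    rw [hS] at hj
    simp only [Finset.coe_image, Set.mem_image, Finset.mem_coe, Finset.mem_Iic] at hj
    obtain ⟨k, hk, rfl⟩ := hj
    have : hM.eigenvalues (ι k) = (f ∘ σ) k := rfl
    rw [this, hse]
    exact hmono hk
  have hbS' : ∀ j ∈ (S' : Set V), sortedEig hM' i ≤ hM'.eigenvalues j := by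
    intro j hj
    rw [hS'] at hj
    simp only [Finset.coe_image, Set.mem_image, Finset.mem_coe, Finset.mem_Ici] at hj
    obtain ⟨k, hk, rfl⟩ := hj
    have : hM'.eigenvalues (ι' k) = (f' ∘ σ') k := rfl
    rw [this, hse']
    exact hmono' hk
  have hle := rayleigh_le hM (S : Set V) _ hbS x hxU
  have hge := rayleigh_ge hM' (S' : Set V) _ hbS' x hxU'
  have hcx := hc x
  have ht : 0 < ‖x‖ ^ 2 := pow_pos (norm_pos_iff.mpr hx0) 2
  nlinarith [hle, hge, hcx, ht]


lemma lap_quad_le (G G' : SimpleGraph V) [DecidableRel G.Adj] [DecidableRel G'.Adj]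
    (x : EuclideanSpace ℝ V) :
    ⟪x, (WithLp.toLp 2 (G'.lapMatrix ℝ *ᵥ x) : EuclideanSpace ℝ V)⟫ ≤
      ⟪x, (WithLp.toLp 2 (G.lapMatrix ℝ *ᵥ x) : EuclideanSpace ℝ V)⟫
        + 2 * (G'.edgeFinset \ G.edgeFinset).card * ‖x‖ ^ 2 := by
  have hinner : ∀ (H : SimpleGraph V) [DecidableRel H.Adj],
      ⟪x, (WithLp.toLp 2 (H.lapMatrix ℝ *ᵥ x) : EuclideanSpace ℝ V)⟫ =
        (∑ i, ∑ j, if H.Adj i j then (x i - x j) ^ 2 else 0) / 2 := by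
    intro H _
    rw [← SimpleGraph.lapMatrix_toLinearMap₂', Matrix.toLinearMap₂'_apply']
    simp [PiLp.inner_apply, RCLike.inner_apply, dotProduct]
    exact Finset.sum_congr rfl fun _ _ => mul_comm _ _
  have hxsq : ∀ i j : V, i ≠ j → (x i - x j) ^ 2 ≤ 2 * ‖x‖ ^ 2 := by
    intro i j hne
    have hn : ‖x‖ ^ 2 = ∑ k, x k ^ 2 := by
      rw [← real_inner_self_eq_norm_sq]
      simp [PiLp.inner_apply, sq]
      rw [← sq, EuclideanSpace.norm_eq, Real.sq_sqrt (Finset.sum_nonneg fun _ _ => sq_nonneg _)]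
      simp [sq]
    have h2 : x i ^ 2 + x j ^ 2 ≤ ∑ k, x k ^ 2 := by
      have h3 := Finset.sum_le_sum_of_subset_of_nonneg (f := fun k => x k ^ 2)
        (Finset.subset_univ ({i, j} : Finset V)) (fun k _ _ => sq_nonneg _)
      rwa [Finset.sum_pair hne] at h3
    nlinarith [sq_nonneg (x i + x j)]
  have hstep : (∑ i, ∑ j, if G'.Adj i j then (x i - x j) ^ 2 else 0) ≤
      (∑ i, ∑ j, if G.Adj i j then (x i - x j) ^ 2 else 0)
      + (∑ i, ∑ j, if (G' \ G).Adj i j then (x i - x j) ^ 2 else 0) := by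
    rw [← Finset.sum_add_distrib]
    refine Finset.sum_le_sum fun i _ => ?_
    rw [← Finset.sum_add_distrib]
    refine Finset.sum_le_sum fun j _ => ?_
    by_cases h1 : G'.Adj i j <;> by_cases h2 : G.Adj i j <;>
      simp [SimpleGraph.sdiff_adj, h1, h2, sq_nonneg]
  have hHbound : (∑ i, ∑ j, if (G' \ G).Adj i j then (x i - x j) ^ 2 else 0) ≤
      ((2 * (G'.edgeFinset \ G.edgeFinset).card : ℕ) : ℝ) * (2 * ‖x‖ ^ 2) := by
    calc (∑ i, ∑ j, if (G' \ G).Adj i j then (x i - x j) ^ 2 else 0)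
        ≤ ∑ i, ∑ j, if (G' \ G).Adj i j then 2 * ‖x‖ ^ 2 else 0 := by
          refine Finset.sum_le_sum fun i _ => Finset.sum_le_sum fun j _ => ?_
          by_cases h : (G' \ G).Adj i j
          · simpa [h] using hxsq i j h.ne
          · simp [h]
      _ = (∑ i, ((G' \ G).degree i : ℝ)) * (2 * ‖x‖ ^ 2) := by
          rw [Finset.sum_mul]
          refine Finset.sum_congr rfl fun i _ => ?_
          rw [SimpleGraph.degree_eq_sum_if_adj (G' \ G) i, Finset.sum_mul]
          simp
      _ = ((2 * (G'.edgeFinset \ G.edgeFinset).card : ℕ) : ℝ) * (2 * ‖x‖ ^ 2) := by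
          rw [← Nat.cast_sum, SimpleGraph.sum_degrees_eq_twice_card_edges]
          have hcc : ∀ (i1 : Fintype ((G' \ G).edgeSet)),
              @SimpleGraph.edgeFinset V (G' \ G) i1 = G'.edgeFinset \ G.edgeFinset := by
            intro i1
            ext e
            simp [SimpleGraph.mem_edgeFinset, SimpleGraph.edgeSet_sdiff, Set.mem_diff,
              Finset.mem_sdiff]
          rw [hcc]
  rw [hinner G', hinner G]
  have hH := hinner (G' \ G)
  push_cast at hHbound
  linarith [hstep, hHbound]

/-- If two simple graphs on the same vertex set of `n` vertices are `A`-edge-adjacent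
(the symmetric difference of their edge sets has cardinality at most `A`), then for
every index `i`, the `i`-th smallest Laplacian eigenvalues differ by at most `2 * A`. -/
theorem edge_sensitivity_bound (n A : ℕ) (G G' : SimpleGraph (Fin n))
    [DecidableRel G.Adj] [DecidableRel G'.Adj]
    (hadj : (symmDiff G.edgeFinset G'.edgeFinset).card ≤ A)
    (i : Fin n) :
    |sortedLapEigs G (Fin.cast (Fintype.card_fin n).symm i)
      - sortedLapEigs G' (Fin.cast (Fintype.card_fin n).symm i)| ≤ (2 * A : ℝ) := by
  have hM : (G.lapMatrix ℝ).IsHermitian :=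
    (SimpleGraph.posSemidef_lapMatrix (R := ℝ) G).isHermitian
  have hM' : (G'.lapMatrix ℝ).IsHermitian :=
    (SimpleGraph.posSemidef_lapMatrix (R := ℝ) G').isHermitian
  set j := Fin.cast (Fintype.card_fin n).symm i with hj
  have hG : sortedLapEigs G = sortedEig hM := rfl
  have hG' : sortedLapEigs G' = sortedEig hM' := rfl
  have hc1 : (((G'.edgeFinset \ G.edgeFinset).card : ℕ) : ℝ) ≤ A := by
    have hsub : G'.edgeFinset \ G.edgeFinset ⊆ symmDiff G.edgeFinset G'.edgeFinset := by
      intro t ht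
      rw [Finset.mem_symmDiff]
      rw [Finset.mem_sdiff] at ht
      exact Or.inr ⟨ht.1, ht.2⟩
    exact_mod_cast (Finset.card_le_card hsub).trans hadj
  have hc2 : (((G.edgeFinset \ G'.edgeFinset).card : ℕ) : ℝ) ≤ A := by
    have hsub : G.edgeFinset \ G'.edgeFinset ⊆ symmDiff G.edgeFinset G'.edgeFinset := by
      intro t ht
      rw [Finset.mem_symmDiff]
      rw [Finset.mem_sdiff] at ht
      exact Or.inl ⟨ht.1, ht.2⟩
    exact_mod_cast (Finset.card_le_card hsub).trans hadj
  have h1 := weyl_one_side hM hM' (2 * A) (fun x => by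
    have hq := lap_quad_le G G' x
    have hnn : (0:ℝ) ≤ ‖x‖ ^ 2 := sq_nonneg _
    nlinarith [hq, hc1, hnn]) j
  have h2 := weyl_one_side hM' hM (2 * A) (fun x => by
    have hq := lap_quad_le G' G x
    have hnn : (0:ℝ) ≤ ‖x‖ ^ 2 := sq_nonneg _
    nlinarith [hq, hc2, hnn]) j
  rw [hG, hG', abs_sub_le_iff]
  constructor <;> linarith
end

section
/- Let G be a connected simple graph on n ≥ 3 vertices, and let G⁺ be the graph on n + 1 vertices obtained from G by adding one new vertex adjacent to at least one vertex of G. Then 1 − n ≤ λ_2(G⁺) − λ_2(G) ≤ 1. -/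
open Matrix Finset

/-- The algebraic connectivity of a finite simple graph: the second-smallest
eigenvalue of its Laplacian matrix (junk value `0` if the graph has fewer than
two vertices). -/
noncomputable def algConn {V : Type*} [Fintype V] [DecidableEq V]
    (G : SimpleGraph V) [DecidableRel G.Adj] : ℝ :=
  if h : 1 < Fintype.card V then sortedLapEigs G ⟨1, h⟩ else 0

section Spectral
variable {V : Type*} [Fintype V] [DecidableEq V] (G : SimpleGraph V) [DecidableRel G.Adj]


lemma sortedLapEigs_mono : Monotone (sortedLapEigs G) :=
  Tuple.monotone_sort _

lemma exists_perm_sortedLapEigs :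
    ∃ π : Fin (Fintype.card V) ≃ V, ∀ j, sortedLapEigs G j = ((SimpleGraph.posSemidef_lapMatrix (R := ℝ) G).isHermitian).eigenvalues (π j) := by
  refine ⟨(Tuple.sort ((((SimpleGraph.posSemidef_lapMatrix (R := ℝ) G).isHermitian).eigenvalues) ∘ (Fintype.equivFin V).symm)).trans
    (Fintype.equivFin V).symm, fun j => rfl⟩

lemma sortedLapEigs_nonneg (j : Fin (Fintype.card V)) : 0 ≤ sortedLapEigs G j := by
  obtain ⟨π, hπ⟩ := exists_perm_sortedLapEigs G
  rw [hπ]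
  exact (SimpleGraph.posSemidef_lapMatrix (R := ℝ) G).eigenvalues_nonneg _

end Spectral

section Spectral2
variable {V : Type*} [Fintype V] [DecidableEq V] (G : SimpleGraph V) [DecidableRel G.Adj]

lemma card_zero_eigs (hconn : G.Connected) :
    Fintype.card {i : V // ((SimpleGraph.posSemidef_lapMatrix (R := ℝ) G).isHermitian).eigenvalues i = 0} = 1 := by
  have hcomp : Fintype.card G.ConnectedComponent = 1 := by
    obtain ⟨v⟩ := hconn.nonempty
    refine Fintype.card_eq_one_iff.2 ⟨G.connectedComponentMk v, ?_⟩
    refine SimpleGraph.ConnectedComponent.ind (fun w => ?_)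
    exact SimpleGraph.ConnectedComponent.sound (hconn.preconnected w v)
  have hker : Module.finrank ℝ (LinearMap.ker (Matrix.toLin' (G.lapMatrix ℝ))) = 1 := by
    rw [← SimpleGraph.card_connectedComponent_eq_finrank_ker_toLin'_lapMatrix, hcomp]
  have htl : Matrix.toLin' (G.lapMatrix ℝ) = (G.lapMatrix ℝ).mulVecLin := by
    apply LinearMap.ext; intro v; rw [Matrix.toLin'_apply, Matrix.mulVecLin_apply]
  have hrank : (G.lapMatrix ℝ).rank = Fintype.card V - 1 := by
    have h2 := LinearMap.finrank_range_add_finrank_ker ((G.lapMatrix ℝ).mulVecLin)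
    rw [← htl, hker] at h2
    have h3 : Module.finrank ℝ (V → ℝ) = Fintype.card V := by
      simp [Module.finrank_pi]
    rw [h3] at h2
    rw [Matrix.rank, ← h2, htl]
    omega
  have hnz := ((SimpleGraph.posSemidef_lapMatrix (R := ℝ) G).isHermitian).rank_eq_card_non_zero_eigs
  rw [hrank] at hnz
  have hc := Fintype.card_subtype_compl
    (fun i : V => ((SimpleGraph.posSemidef_lapMatrix (R := ℝ) G).isHermitian).eigenvalues i ≠ 0)
  have hc2 : Fintype.card {i : V // ¬ ((SimpleGraph.posSemidef_lapMatrix (R := ℝ) G).isHermitian).eigenvalues i ≠ 0}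
      = Fintype.card {i : V // ((SimpleGraph.posSemidef_lapMatrix (R := ℝ) G).isHermitian).eigenvalues i = 0} :=
    Fintype.card_congr (Equiv.subtypeEquivRight (fun i => not_not))
  rw [hc2, ← hnz] at hc
  rw [hc]
  have hV : 1 ≤ Fintype.card V := Fintype.card_pos_iff.2 hconn.nonempty
  omega

end Spectral2

section Spectral3
variable {V : Type*} [Fintype V] [DecidableEq V] (G : SimpleGraph V) [DecidableRel G.Adj]

lemma sortedLapEigs_zero (hconn : G.Connected) (h : 0 < Fintype.card V) :
    sortedLapEigs G ⟨0, h⟩ = 0 := by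
  obtain ⟨π, hπ⟩ := exists_perm_sortedLapEigs G
  have hcard := card_zero_eigs G hconn
  have : Nonempty {i : V // ((SimpleGraph.posSemidef_lapMatrix (R := ℝ) G).isHermitian).eigenvalues i = 0} := by
    rw [← Fintype.card_pos_iff, hcard]; norm_num
  obtain ⟨⟨i, hi⟩⟩ := this
  have hj : sortedLapEigs G (π.symm i) = 0 := by rw [hπ, Equiv.apply_symm_apply, hi]
  refine le_antisymm ?_ (sortedLapEigs_nonneg G _)
  calc sortedLapEigs G ⟨0, h⟩ ≤ sortedLapEigs G (π.symm i) :=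
        sortedLapEigs_mono G (by simp [Fin.le_def])
    _ = 0 := hj

lemma card_zero_sorted (hconn : G.Connected) :
    Fintype.card {j // sortedLapEigs G j = 0} = 1 := by
  obtain ⟨π, hπ⟩ := exists_perm_sortedLapEigs G
  rw [← card_zero_eigs G hconn]
  exact Fintype.card_congr (Equiv.subtypeEquiv π (fun j => by rw [hπ]))

lemma algConn_pos (hconn : G.Connected) (h : 1 < Fintype.card V) :
    0 < algConn G := by
  rw [algConn, dif_pos h]
  rcases lt_or_eq_of_le (sortedLapEigs_nonneg G ⟨1, h⟩) with h1 | h1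
  · exact h1
  exfalso
  have h0 : (0 : ℕ) < Fintype.card V := by omega
  have e0 : sortedLapEigs G ⟨0, h0⟩ = 0 := sortedLapEigs_zero G hconn h0
  have : Fintype.card {j // sortedLapEigs G j = 0} ≥ 2 := by
    have : Nontrivial {j // sortedLapEigs G j = 0} :=
      ⟨⟨⟨⟨0, h0⟩, e0⟩, ⟨⟨1, h⟩, h1.symm⟩, by simp⟩⟩
    exact Fintype.one_lt_card
  rw [card_zero_sorted G hconn] at this
  omega

lemma algConn_le_nonzero_eig (hconn : G.Connected) (h : 1 < Fintype.card V) (i : V)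
    (hi : ((SimpleGraph.posSemidef_lapMatrix (R := ℝ) G).isHermitian).eigenvalues i ≠ 0) :
    algConn G ≤ ((SimpleGraph.posSemidef_lapMatrix (R := ℝ) G).isHermitian).eigenvalues i := by
  obtain ⟨π, hπ⟩ := exists_perm_sortedLapEigs G
  have hj : sortedLapEigs G (π.symm i) ≠ 0 := by rw [hπ, Equiv.apply_symm_apply]; exact hi
  have h0 : (0:ℕ) < Fintype.card V := by omega
  have hge : (1 : ℕ) ≤ (π.symm i : Fin (Fintype.card V)).val := by
    by_contra hlt
    push_neg at hlt
    have : (π.symm i) = ⟨0, h0⟩ := Fin.ext (by simpa using Nat.lt_one_iff.mp hlt)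
    rw [this, sortedLapEigs_zero G hconn h0] at hj
    exact hj rfl
  rw [algConn, dif_pos h, ← Equiv.apply_symm_apply π i, ← hπ]
  exact sortedLapEigs_mono G (by simpa [Fin.le_def])

end Spectral3

section HermDecomp
variable {V : Type*} [Fintype V] [DecidableEq V]

lemma herm_decomp {A : Matrix V V ℝ} (hA : A.IsHermitian) (x : V → ℝ) :
    x ⬝ᵥ (A *ᵥ x) =
      ∑ i, hA.eigenvalues i * ((star (hA.eigenvectorUnitary : Matrix V V ℝ) *ᵥ x) i)^2 ∧
    x ⬝ᵥ x = ∑ i, ((star (hA.eigenvectorUnitary : Matrix V V ℝ) *ᵥ x) i)^2 := by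
  set U := (hA.eigenvectorUnitary : Matrix V V ℝ) with hU
  set y := star U *ᵥ x with hy
  have hstar : star U = Uᵀ := Matrix.conjTranspose_eq_transpose_of_trivial U
  have hyvm : y = x ᵥ* U := by rw [hy, hstar, Matrix.mulVec_transpose]
  have hUU : U * star U = 1 := Matrix.mem_unitaryGroup_iff.mp hA.eigenvectorUnitary.2
  constructor
  · conv_lhs => rw [hA.spectral_theorem]; simp only [Unitary.conjStarAlgAut_apply, Unitary.coe_star]
    rw [← Matrix.mulVec_mulVec, ← Matrix.mulVec_mulVec, Matrix.dotProduct_mulVec, ← hyvm, ← hy]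
    rw [dotProduct]
    refine Finset.sum_congr rfl (fun i _ => ?_)
    rw [Matrix.mulVec_diagonal]
    have : (RCLike.ofReal ∘ hA.eigenvalues) i = hA.eigenvalues i := by
      simp [RCLike.ofReal_real_eq_id]
    rw [this]; ring
  · conv_lhs => rw [show x ⬝ᵥ x = x ⬝ᵥ ((U * star U) *ᵥ x) by rw [hUU, Matrix.one_mulVec]]
    rw [← Matrix.mulVec_mulVec, Matrix.dotProduct_mulVec, ← hyvm, ← hy, dotProduct]
    refine Finset.sum_congr rfl (fun i _ => ?_)
    ring

end HermDecomp

section Rayleigh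
variable {V : Type*} [Fintype V] [DecidableEq V] (G : SimpleGraph V) [DecidableRel G.Adj]

lemma star_unitary_mulVec_apply {A : Matrix V V ℝ} (hA : A.IsHermitian) (x : V → ℝ) (i : V) :
    (star (hA.eigenvectorUnitary : Matrix V V ℝ) *ᵥ x) i =
      ∑ j, (hA.eigenvectorBasis i) j * x j := by
  rw [show star (hA.eigenvectorUnitary : Matrix V V ℝ) = (hA.eigenvectorUnitary : Matrix V V ℝ)ᵀ
    from Matrix.conjTranspose_eq_transpose_of_trivial _, Matrix.mulVec, dotProduct]
  refine Finset.sum_congr rfl (fun j _ => ?_)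
  rw [Matrix.transpose_apply, Matrix.IsHermitian.eigenvectorUnitary_apply]

lemma zero_eig_component (hconn : G.Connected) (x : V → ℝ) (hx : ∑ v, x v = 0) (i : V)
    (hi : ((SimpleGraph.posSemidef_lapMatrix (R := ℝ) G).isHermitian).eigenvalues i = 0) :
    (star (((SimpleGraph.posSemidef_lapMatrix (R := ℝ) G).isHermitian).eigenvectorUnitary :
      Matrix V V ℝ) *ᵥ x) i = 0 := by
  set hA := (SimpleGraph.posSemidef_lapMatrix (R := ℝ) G).isHermitian
  have hker : G.lapMatrix ℝ *ᵥ ⇑(hA.eigenvectorBasis i) = 0 := by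
    rw [hA.mulVec_eigenvectorBasis, hi, zero_smul]
  have hconst : ∀ v w : V, (hA.eigenvectorBasis i) v = (hA.eigenvectorBasis i) w := by
    have := (SimpleGraph.lapMatrix_mulVec_eq_zero_iff_forall_reachable (G := G)).mp hker
    exact fun v w => this v w (hconn.preconnected v w)
  obtain ⟨v₀⟩ := hconn.nonempty
  rw [star_unitary_mulVec_apply]
  calc ∑ j, (hA.eigenvectorBasis i) j * x j = ∑ j, (hA.eigenvectorBasis i) v₀ * x j :=
        Finset.sum_congr rfl (fun j _ => by rw [hconst j v₀])
    _ = (hA.eigenvectorBasis i) v₀ * ∑ j, x j := by rw [Finset.mul_sum]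
    _ = 0 := by rw [hx, mul_zero]

lemma rayleigh_le_s3 (hconn : G.Connected) (h : 1 < Fintype.card V) (x : V → ℝ)
    (hx : ∑ v, x v = 0) :
    algConn G * (x ⬝ᵥ x) ≤ x ⬝ᵥ (G.lapMatrix ℝ *ᵥ x) := by
  set hA := (SimpleGraph.posSemidef_lapMatrix (R := ℝ) G).isHermitian
  obtain ⟨h1, h2⟩ := herm_decomp hA x
  rw [h1, h2, Finset.mul_sum]
  refine Finset.sum_le_sum (fun i _ => ?_)
  by_cases hi : hA.eigenvalues i = 0
  · rw [zero_eig_component G hconn x hx i hi]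
    simp [hi]
  · exact mul_le_mul_of_nonneg_right (algConn_le_nonzero_eig G hconn h i hi) (sq_nonneg _)

lemma exists_fiedler (hconn : G.Connected) (h : 1 < Fintype.card V) :
    ∃ y : V → ℝ, y ≠ 0 ∧ (∑ v, y v = 0) ∧
      G.lapMatrix ℝ *ᵥ y = algConn G • y := by
  set hA := (SimpleGraph.posSemidef_lapMatrix (R := ℝ) G).isHermitian
  obtain ⟨π, hπ⟩ := exists_perm_sortedLapEigs G
  set i₁ : V := π ⟨1, h⟩ with hi₁
  have heig : hA.eigenvalues i₁ = algConn G := by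
    rw [algConn, dif_pos h, hπ]
  refine ⟨⇑(hA.eigenvectorBasis i₁), ?_, ?_, ?_⟩
  · intro h0
    have : ‖hA.eigenvectorBasis i₁‖ = 1 := hA.eigenvectorBasis.orthonormal.1 i₁
    rw [show hA.eigenvectorBasis i₁ = 0 from PiLp.ext (fun v => congrFun h0 v)] at this
    simp at this
  · -- sum is zero
    have hpos : 0 < algConn G := algConn_pos G hconn h
    have hmv : G.lapMatrix ℝ *ᵥ ⇑(hA.eigenvectorBasis i₁) =
        algConn G • ⇑(hA.eigenvectorBasis i₁) := by
      rw [hA.mulVec_eigenvectorBasis, heig]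
    have hsum : ∑ v, (G.lapMatrix ℝ *ᵥ ⇑(hA.eigenvectorBasis i₁)) v = 0 := by
      have hsymm : ∀ v w : V, G.lapMatrix ℝ v w = G.lapMatrix ℝ w v := by
        intro v w
        conv_lhs => rw [← (SimpleGraph.isSymm_lapMatrix G (R := ℝ))]
        rw [Matrix.transpose_apply]
      calc ∑ v, (G.lapMatrix ℝ *ᵥ ⇑(hA.eigenvectorBasis i₁)) v
          = ∑ v, ∑ w, G.lapMatrix ℝ v w * (hA.eigenvectorBasis i₁) w := rfl
        _ = ∑ w, (∑ v, G.lapMatrix ℝ w v) * (hA.eigenvectorBasis i₁) w := by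
            rw [Finset.sum_comm]
            refine Finset.sum_congr rfl (fun w _ => ?_)
            rw [Finset.sum_mul]
            exact Finset.sum_congr rfl (fun v _ => by rw [hsymm v w])
        _ = 0 := by
            refine Finset.sum_eq_zero (fun w _ => ?_)
            have := congrFun (SimpleGraph.lapMatrix_mulVec_const_eq_zero G (R := ℝ)) w
            rw [Matrix.mulVec, dotProduct] at this
            simp only [mul_one, Pi.zero_apply] at this
            rw [this, zero_mul]
    rw [hmv] at hsum
    simp only [Pi.smul_apply, smul_eq_mul, ← Finset.mul_sum] at hsum
    rcases mul_eq_zero.mp hsum with h' | h'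
    · exact absurd h' (ne_of_gt hpos)
    · exact h'
  · rw [hA.mulVec_eigenvectorBasis, heig]

end Rayleigh

section GraphQuad
variable {V : Type*} [Fintype V] [DecidableEq V] (G : SimpleGraph V) [DecidableRel G.Adj]

lemma lap_quad (x : V → ℝ) : x ⬝ᵥ (G.lapMatrix ℝ *ᵥ x) =
    (∑ i, ∑ j, if G.Adj i j then (x i - x j)^2 else 0) / 2 := by
  rw [← Matrix.toLinearMap₂'_apply', SimpleGraph.lapMatrix_toLinearMap₂']

end GraphQuad


/-- The graph on `n + 1` vertices obtained from a graph `G` on `n` vertices by adding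
one new vertex whose neighbourhood in `G` is `s`. -/
def addVertex {n : ℕ} (G : SimpleGraph (Fin n)) (s : Finset (Fin n)) :
    SimpleGraph (Option (Fin n)) where
  Adj x y :=
    match x, y with
    | some u, some w => G.Adj u w
    | some u, none => u ∈ s
    | none, some w => w ∈ s
    | none, none => False
  symm := ⟨by
    rintro (u | u) (w | w) h <;> simp_all
    exact h.symm⟩
  loopless := ⟨by
    rintro (u | u) h <;> simp_all⟩

instance {n : ℕ} (G : SimpleGraph (Fin n)) [DecidableRel G.Adj] (s : Finset (Fin n)) :
    DecidableRel (addVertex G s).Adj := fun x y =>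
  match x, y with
  | some u, some w => inferInstanceAs (Decidable (G.Adj u w))
  | some u, none => inferInstanceAs (Decidable (u ∈ s))
  | none, some w => inferInstanceAs (Decidable (w ∈ s))
  | none, none => inferInstanceAs (Decidable False)

section AddVertex
variable {n : ℕ} (G : SimpleGraph (Fin n)) [DecidableRel G.Adj] (s : Finset (Fin n))

lemma addVertex_connected (hconn : G.Connected) (hs : s.Nonempty) :
    (addVertex G s).Connected := by
  obtain ⟨u₀, hu₀⟩ := hs
  have hns : (addVertex G s).Adj none (some u₀) := hu₀
  rw [SimpleGraph.connected_iff]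
  refine ⟨fun x y => ?_, ⟨none⟩⟩
  have key : ∀ z : Option (Fin n), (addVertex G s).Reachable z (some u₀) := by
    rintro (_ | v)
    · exact hns.reachable
    · obtain ⟨w⟩ := hconn.preconnected v u₀
      exact SimpleGraph.Walk.reachable
        (SimpleGraph.Walk.map ⟨some, fun {a b} hab => hab⟩ w)
  exact (key x).trans (key y).symm

lemma quad_addVertex (z : Option (Fin n) → ℝ) :
    (∑ i, ∑ j, if (addVertex G s).Adj i j then (z i - z j)^2 else 0)
      = (∑ i, ∑ j, if G.Adj i j then (z (some i) - z (some j))^2 else 0)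
        + 2 * ∑ w ∈ s, (z (some w) - z none)^2 := by
  rw [Fintype.sum_option]
  have h1 : (∑ j : Option (Fin n), if (addVertex G s).Adj none j then (z none - z j)^2 else 0)
      = ∑ w ∈ s, (z (some w) - z none)^2 := by
    rw [Fintype.sum_option]
    rw [if_neg (show ¬ (addVertex G s).Adj none none from fun h => h), zero_add]
    simp only [show ∀ i, (addVertex G s).Adj none (some i) ↔ i ∈ s from fun i => Iff.rfl]
    rw [Finset.sum_ite_mem, Finset.univ_inter]
    exact Finset.sum_congr rfl fun w _ => by ring
  have h2 : ∀ i : Fin n, (∑ j : Option (Fin n),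
        if (addVertex G s).Adj (some i) j then (z (some i) - z j)^2 else 0)
      = (if i ∈ s then (z (some i) - z none)^2 else 0)
        + ∑ w : Fin n, if G.Adj i w then (z (some i) - z (some w))^2 else 0 := by
    intro i
    rw [Fintype.sum_option]
    simp only [addVertex]
    rfl
  have h3 : ∑ i : Fin n, (∑ j : Option (Fin n),
        if (addVertex G s).Adj (some i) j then (z (some i) - z j)^2 else 0)
      = (∑ i, if i ∈ s then (z (some i) - z none)^2 else 0)
        + ∑ i, ∑ w : Fin n, if G.Adj i w then (z (some i) - z (some w))^2 else 0 := by
    rw [← Finset.sum_add_distrib]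
    exact Finset.sum_congr rfl fun i _ => h2 i
  rw [h1, h3, Finset.sum_ite_mem, Finset.univ_inter]
  ring

end AddVertex

section MoreLemmas
variable {V : Type*} [Fintype V] [DecidableEq V] (G : SimpleGraph V) [DecidableRel G.Adj]

lemma complete_quad (hcomp : ∀ u v : V, u ≠ v → G.Adj u v) (y : V → ℝ) :
    (∑ i, ∑ j, if G.Adj i j then (y i - y j)^2 else 0)
      = 2 * (Fintype.card V) * (∑ j, (y j)^2) - 2 * (∑ j, y j)^2 := by
  have h : ∀ i j : V, (if G.Adj i j then (y i - y j)^2 else 0) = (y i - y j)^2 := by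
    intro i j
    by_cases hij : i = j
    · subst hij
      rw [if_neg (G.loopless.irrefl i)]
      simp
    · rw [if_pos (hcomp i j hij)]
  simp_rw [h, sub_sq]
  rw [Finset.sum_comm]
  simp_rw [Finset.sum_add_distrib, Finset.sum_sub_distrib, Finset.sum_const, Finset.card_univ,
    nsmul_eq_mul, ← Finset.sum_mul, ← Finset.mul_sum]
  ring

lemma pair_test (hconn : G.Connected) (h : 1 < Fintype.card V) (u v : V) (hne : u ≠ v) :
    algConn G * 2 ≤ (G.degree u : ℝ) + G.degree v + (if G.Adj u v then 2 else 0) := by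
  set x : V → ℝ := fun w => if w = u then (1:ℝ) else if w = v then -1 else 0 with hx
  have hxu : x u = 1 := by simp [hx]
  have hxv : x v = -1 := by simp [hx, hne.symm]
  have hxo : ∀ w, w ≠ u → w ≠ v → x w = 0 := fun w h1 h2 => by simp [hx, h1, h2]
  have hsplit : ∀ w, x w = (if w = u then (1:ℝ) else 0) + (if w = v then -1 else 0) := by
    intro w
    by_cases h1 : w = u <;> by_cases h2 : w = v
    · exact absurd (h1 ▸ h2) hne
    all_goals simp [hx, h1, h2, hne, hne.symm]
  have hsum : ∑ w, x w = 0 := by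
    simp_rw [hsplit]
    rw [Finset.sum_add_distrib]
    simp
  have hray := rayleigh_le_s3 G hconn h x hsum
  have hxx : x ⬝ᵥ x = 2 := by
    rw [dotProduct]
    have : ∀ w, x w * x w = (if w = u then (1:ℝ) else 0) + (if w = v then 1 else 0) := by
      intro w
      by_cases h1 : w = u <;> by_cases h2 : w = v
      · exact absurd (h1 ▸ h2) hne
      all_goals simp [hx, h1, h2, hne, hne.symm]
    simp_rw [this]
    rw [Finset.sum_add_distrib]
    simp; norm_num
  have hnb : ∀ w : V, G.lapMatrix ℝ *ᵥ x = G.lapMatrix ℝ *ᵥ x := fun _ => rfl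
  have hLu : (G.lapMatrix ℝ *ᵥ x) u = (G.degree u : ℝ) + (if G.Adj u v then 1 else 0) := by
    rw [SimpleGraph.lapMatrix_mulVec_apply, hxu, mul_one]
    have : ∑ w ∈ G.neighborFinset u, x w = - (if G.Adj u v then 1 else 0) := by
      by_cases hadj : G.Adj u v
      · rw [if_pos hadj]
        rw [show ∑ w ∈ G.neighborFinset u, x w = x v from ?_]
        · rw [hxv]
        rw [← Finset.sum_subset (Finset.singleton_subset_iff.2
            ((SimpleGraph.mem_neighborFinset G u v).2 hadj)) ?_]
        · simp
        · intro w hw hnotin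
          refine hxo w ?_ ?_
          · rintro rfl; exact (G.loopless.irrefl _ ((SimpleGraph.mem_neighborFinset _ _ _).1 hw)).elim
          · rintro rfl; simp at hnotin
      · rw [if_neg hadj]
        rw [Finset.sum_eq_zero, neg_zero]
        intro w hw
        refine hxo w ?_ ?_
        · rintro rfl; exact (G.loopless.irrefl _ ((SimpleGraph.mem_neighborFinset _ _ _).1 hw)).elim
        · rintro rfl; exact hadj ((SimpleGraph.mem_neighborFinset _ _ _).1 hw)
    rw [this]; ring
  have hLv : (G.lapMatrix ℝ *ᵥ x) v = -((G.degree v : ℝ) + (if G.Adj u v then 1 else 0)) := by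
    rw [SimpleGraph.lapMatrix_mulVec_apply, hxv]
    have : ∑ w ∈ G.neighborFinset v, x w = (if G.Adj u v then 1 else 0) := by
      by_cases hadj : G.Adj u v
      · rw [if_pos hadj]
        rw [show ∑ w ∈ G.neighborFinset v, x w = x u from ?_]
        · rw [hxu]
        rw [← Finset.sum_subset (Finset.singleton_subset_iff.2
            ((SimpleGraph.mem_neighborFinset G v u).2 hadj.symm)) ?_]
        · simp
        · intro w hw hnotin
          refine hxo w ?_ ?_
          · rintro rfl; simp at hnotin
          · rintro rfl; exact (G.loopless.irrefl _ ((SimpleGraph.mem_neighborFinset _ _ _).1 hw)).elim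
      · rw [if_neg hadj]
        refine Finset.sum_eq_zero ?_
        intro w hw
        refine hxo w ?_ ?_
        · rintro rfl; exact hadj (((SimpleGraph.mem_neighborFinset _ _ _).1 hw).symm)
        · rintro rfl; exact (G.loopless.irrefl _ ((SimpleGraph.mem_neighborFinset _ _ _).1 hw)).elim
    rw [this]; ring
  have hquad : x ⬝ᵥ (G.lapMatrix ℝ *ᵥ x)
      = (G.degree u : ℝ) + G.degree v + (if G.Adj u v then 2 else 0) := by
    rw [dotProduct]
    have hterm : ∀ w, x w * (G.lapMatrix ℝ *ᵥ x) w =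
        (if w = u then ((G.degree u : ℝ) + (if G.Adj u v then 1 else 0)) else 0)
          + (if w = v then ((G.degree v : ℝ) + (if G.Adj u v then 1 else 0)) else 0) := by
      intro w
      by_cases h1 : w = u <;> by_cases h2 : w = v
      · exact absurd (h1 ▸ h2) hne
      · subst h1; rw [hxu, hLu]; simp [hne]
      · subst h2; rw [hxv, hLv]; simp [hne.symm]
      · rw [hxo w h1 h2, zero_mul, if_neg h1, if_neg h2, add_zero]
    simp_rw [hterm]
    rw [Finset.sum_add_distrib]
    simp only [Finset.sum_ite_eq', Finset.mem_univ, if_true]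
    by_cases hadj : G.Adj u v <;> simp [hadj] <;> ring
  rw [hxx] at hray
  rw [hquad] at hray
  exact hray

end MoreLemmas

lemma dot_self_pos {V : Type*} [Fintype V] {x : V → ℝ} (hx : x ≠ 0) :
    0 < x ⬝ᵥ x := by
  obtain ⟨i, hi⟩ := Function.ne_iff.mp hx
  rw [dotProduct]
  exact Finset.sum_pos' (fun j _ => mul_self_nonneg _)
    ⟨i, Finset.mem_univ i, mul_self_pos.mpr hi⟩

/-- If `G` is a connected simple graph on `n ≥ 3` vertices and `G⁺` is obtained from `G`
by adding one new vertex adjacent to at least one vertex of `G`, then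
`1 − n ≤ λ₂(G⁺) − λ₂(G) ≤ 1`. -/
theorem lambda2_add_vertex_bounds (n : ℕ) (hn : 3 ≤ n) (G : SimpleGraph (Fin n))
    [DecidableRel G.Adj] (hconn : G.Connected)
    (s : Finset (Fin n)) (hs : s.Nonempty) :
    1 - (n : ℝ) ≤ algConn (addVertex G s) - algConn G ∧
      algConn (addVertex G s) - algConn G ≤ 1 := by
  have hcardG : 1 < Fintype.card (Fin n) := by simp; omega
  have hcardP : 1 < Fintype.card (Option (Fin n)) := by
    rw [Fintype.card_option, Fintype.card_fin]; omega
  have hconnP := addVertex_connected G s hconn hs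
  constructor
  · -- lower bound
    by_cases hcomp : ∀ u v : Fin n, u ≠ v → G.Adj u v
    · -- complete case : algConn G ≤ n and algConn (addVertex G s) ≥ 1
      have huv : (⟨0, by omega⟩ : Fin n) ≠ ⟨1, by omega⟩ := by
        intro h
        have := congrArg Fin.val h
        simp at this
      have hlam := pair_test G hconn hcardG _ _ huv
      have hdeg1 : (G.degree (⟨0, by omega⟩ : Fin n) : ℝ) ≤ (n : ℝ) - 1 := by
        have h := G.degree_lt_card_verts (⟨0, by omega⟩ : Fin n)
        rw [Fintype.card_fin] at h
        have h' : G.degree (⟨0, by omega⟩ : Fin n) + 1 ≤ n := h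
        have h'' : (G.degree (⟨0, by omega⟩ : Fin n) : ℝ) + 1 ≤ (n:ℝ) := by exact_mod_cast h'
        linarith
      have hdeg2 : (G.degree (⟨1, by omega⟩ : Fin n) : ℝ) ≤ (n : ℝ) - 1 := by
        have h := G.degree_lt_card_verts (⟨1, by omega⟩ : Fin n)
        rw [Fintype.card_fin] at h
        have h' : G.degree (⟨1, by omega⟩ : Fin n) + 1 ≤ n := h
        have h'' : (G.degree (⟨1, by omega⟩ : Fin n) : ℝ) + 1 ≤ (n:ℝ) := by exact_mod_cast h'
        linarith
      have hiteb : (if G.Adj (⟨0, by omega⟩ : Fin n) ⟨1, by omega⟩ then (2:ℝ) else 0) ≤ 2 := by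
        split <;> norm_num
      have hlamn : algConn G ≤ n := by linarith
      -- now algConn (addVertex G s) ≥ 1
      obtain ⟨z, hz0, hzsum, hzeig⟩ := exists_fiedler (addVertex G s) hconnP hcardP
      set y : Fin n → ℝ := fun w => z (some w) with hy
      set a : ℝ := z none with ha
      rw [Fintype.sum_option] at hzsum
      have hysum : ∑ w, y w = -a := by
        have h' : a + ∑ w, y w = 0 := hzsum
        linarith
      have hzz : z ⬝ᵥ z = a^2 + ∑ w, (y w)^2 := by
        rw [dotProduct, Fintype.sum_option, ← ha]
        simp only [pow_two]
        rfl
      have hLz : z ⬝ᵥ ((addVertex G s).lapMatrix ℝ *ᵥ z)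
          = (n:ℝ) * (∑ w, (y w)^2) - a^2 + ∑ w ∈ s, (y w - a)^2 := by
        rw [lap_quad, quad_addVertex, complete_quad G hcomp y, Fintype.card_fin, hysum]
        ring
      have hzzeq : z ⬝ᵥ ((addVertex G s).lapMatrix ℝ *ᵥ z) = algConn (addVertex G s) * (z ⬝ᵥ z) := by
        rw [hzeig, dotProduct_smul, smul_eq_mul]
      obtain ⟨u₀, hu₀⟩ := hs
      have hK : (y u₀ - a)^2 ≤ ∑ w ∈ s, (y w - a)^2 :=
        Finset.single_le_sum (f := fun w => (y w - a)^2) (fun w _ => sq_nonneg _) hu₀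
      have hCS : (∑ w ∈ Finset.univ.erase u₀, y w)^2
          ≤ ((n:ℝ) - 1) * ∑ w ∈ Finset.univ.erase u₀, (y w)^2 := by
        have h := sq_sum_le_card_mul_sum_sq (s := Finset.univ.erase u₀) (f := y)
        have hcard : (Finset.univ.erase u₀).card = n - 1 := by
          rw [Finset.card_erase_of_mem (Finset.mem_univ u₀), Finset.card_univ, Fintype.card_fin]
        rw [hcard] at h
        have hc : ((n - 1 : ℕ) : ℝ) = (n:ℝ) - 1 := by
          rw [Nat.cast_sub (by omega)]; norm_num
        calc (∑ w ∈ Finset.univ.erase u₀, y w)^2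
            ≤ ((n - 1 : ℕ) : ℝ) * ∑ w ∈ Finset.univ.erase u₀, (y w)^2 := by exact_mod_cast h
          _ = ((n:ℝ) - 1) * ∑ w ∈ Finset.univ.erase u₀, (y w)^2 := by rw [hc]
      have hse : ∑ w ∈ Finset.univ.erase u₀, y w = -a - y u₀ := by
        rw [Finset.sum_erase_eq_sub (Finset.mem_univ u₀), hysum]
      have hse2 : ∑ w ∈ Finset.univ.erase u₀, (y w)^2 = (∑ w, (y w)^2) - (y u₀)^2 :=
        Finset.sum_erase_eq_sub (Finset.mem_univ u₀)
      rw [hse, hse2] at hCS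
      have hn3 : (3:ℝ) ≤ n := by exact_mod_cast hn
      have hgoal1 : 1 * (z ⬝ᵥ z) ≤ algConn (addVertex G s) * (z ⬝ᵥ z) := by
        rw [← hzzeq, hzz, hLz, one_mul]
        nlinarith [hK, hCS, sq_nonneg (y u₀)]
      have hzpos : 0 < z ⬝ᵥ z := dot_self_pos hz0
      have h1le : (1:ℝ) ≤ algConn (addVertex G s) := le_of_mul_le_mul_right hgoal1 hzpos
      linarith
    · -- non-complete case : algConn G ≤ n - 1, algConn (addVertex G s) > 0
      push_neg at hcomp
      obtain ⟨u, v, hne, hnadj⟩ := hcomp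
      have hlam := pair_test G hconn hcardG u v hne
      rw [if_neg hnadj, add_zero] at hlam
      have hdeg1 : (G.degree u : ℝ) ≤ (n : ℝ) - 1 := by
        have h := G.degree_lt_card_verts u
        rw [Fintype.card_fin] at h
        have h' : G.degree u + 1 ≤ n := h
        have h'' : (G.degree u : ℝ) + 1 ≤ (n:ℝ) := by exact_mod_cast h'
        linarith
      have hdeg2 : (G.degree v : ℝ) ≤ (n : ℝ) - 1 := by
        have h := G.degree_lt_card_verts v
        rw [Fintype.card_fin] at h
        have h' : G.degree v + 1 ≤ n := h
        have h'' : (G.degree v : ℝ) + 1 ≤ (n:ℝ) := by exact_mod_cast h'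
        linarith
      have hpos := algConn_pos (addVertex G s) hconnP hcardP
      linarith
  · -- upper bound
    obtain ⟨y, hy0, hysum, hyeig⟩ := exists_fiedler G hconn hcardG
    set z : Option (Fin n) → ℝ := fun o => o.elim 0 y with hzdef
    have hzsum : ∑ o, z o = 0 := by
      rw [Fintype.sum_option]
      show (0:ℝ) + ∑ w, y w = 0
      rw [zero_add, hysum]
    have hray := rayleigh_le_s3 (addVertex G s) hconnP hcardP z hzsum
    have hzz : z ⬝ᵥ z = y ⬝ᵥ y := by
      rw [dotProduct, dotProduct, Fintype.sum_option]
      simp [hzdef]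
    have hyLy : y ⬝ᵥ (G.lapMatrix ℝ *ᵥ y) = algConn G * (y ⬝ᵥ y) := by
      rw [hyeig, dotProduct_smul, smul_eq_mul]
    have hsle : ∑ w ∈ s, (y w)^2 ≤ ∑ w, (y w)^2 :=
      Finset.sum_le_sum_of_subset_of_nonneg (Finset.subset_univ s)
        (fun w _ _ => sq_nonneg _)
    have hyy : y ⬝ᵥ y = ∑ w, (y w)^2 := by
      rw [dotProduct]; simp [pow_two]
    have hLz : z ⬝ᵥ ((addVertex G s).lapMatrix ℝ *ᵥ z)
        ≤ algConn G * (y ⬝ᵥ y) + y ⬝ᵥ y := by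
      rw [lap_quad, quad_addVertex]
      have hGpart : (∑ i, ∑ j, if G.Adj i j then (z (some i) - z (some j))^2 else 0)
          = 2 * (y ⬝ᵥ (G.lapMatrix ℝ *ᵥ y)) := by
        rw [lap_quad]
        simp only [hzdef, Option.elim]
        ring
      have hnonepart : ∑ w ∈ s, (z (some w) - z none)^2 = ∑ w ∈ s, (y w)^2 := by
        refine Finset.sum_congr rfl (fun w _ => ?_)
        simp [hzdef]
      rw [hGpart, hnonepart, hyLy]
      rw [hyy]
      linarith
    have hzpos : 0 < y ⬝ᵥ y := dot_self_pos hy0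
    rw [hzz] at hray
    have : algConn (addVertex G s) * (y ⬝ᵥ y) ≤ (algConn G + 1) * (y ⬝ᵥ y) := by
      calc algConn (addVertex G s) * (y ⬝ᵥ y) ≤ z ⬝ᵥ ((addVertex G s).lapMatrix ℝ *ᵥ z) := hray
        _ ≤ algConn G * (y ⬝ᵥ y) + y ⬝ᵥ y := hLz
        _ = (algConn G + 1) * (y ⬝ᵥ y) := by ring
    have hfin := le_of_mul_le_mul_right this hzpos
    linarith
end

section
/- Let ε > 0, δ ∈ (0, 1), n ∈ ℕ, and A ∈ ℕ with 0 < 2A ≤ n. Suppose b > 0 satisfies ε − log ΔC(b) − log(1 − δ) > 0 and b ≥ 2A / (ε − log ΔC(b) − log(1 − δ)), where ΔC(b) = (2 − e^{−2A/b} − e^{−(n−2A)/b}) / (1 − e^{−n/b}). Then for all λ, λ' ∈ [0, n] with |λ − λ'| ≤ 2A (in particular, for corresponding Laplacian eigenvalues of any two A-edge-adjacent graphs on n vertices) and for every Borel set S ⊆ ℝ, μ_{λ,b}(S) ≤ e^ε · μ_{λ',b}(S) + δ. -/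
open MeasureTheory

/-- The normalizing constant of the bounded Laplace mechanism on `[0, n]`. -/
noncomputable def Cnorm (n : ℕ) (lam b : ℝ) : ℝ :=
  ∫ x in (0 : ℝ)..(n : ℝ), (1 / (2 * b)) * Real.exp (-|x - lam| / b)

/-- The bounded Laplace distribution on `[0, n]` with location `lam` and scale `b`:
the probability measure on `ℝ` with density
`x ↦ (1/(2b·C(lam,b))) e^{−|x−lam|/b}` on `[0, n]` and `0` elsewhere. -/
noncomputable def boundedLaplace (n : ℕ) (lam b : ℝ) : Measure ℝ :=
  volume.withDensity fun x =>
    if x ∈ Set.Icc (0 : ℝ) (n : ℝ) then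
      ENNReal.ofReal ((1 / (2 * b * Cnorm n lam b)) * Real.exp (-|x - lam| / b))
    else 0

open Real

lemma poly_key (p q r : ℝ) (hp0 : 0 < p) (hq0 : 0 < q) (hr0 : 0 < r)
    (hp1 : p ≤ 1) (hq1 : q ≤ 1) (hrpq : r ≤ p * q) :
    (2 * (p*q) - (p*q)^2 - r) * (1 - r) ≤ (2*q - q^2 - r) * (2*p - p^2 - r) := by
  have h1 : 0 ≤ (1 - p) * (1 - q) := mul_nonneg (by linarith) (by linarith)
  have h2 : 0 ≤ 2*(p*q) - r*(p+q+p*q-1) := by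
    rcases le_or_gt (p+q+p*q-1) 0 with h | h
    · nlinarith [mul_nonneg hr0.le (neg_nonneg.2 h), mul_pos hp0 hq0]
    · nlinarith [mul_nonneg (sub_nonneg.2 hrpq) h.le,
        mul_nonneg (mul_pos hp0 hq0).le (by nlinarith : (0:ℝ) ≤ 2 - (p+q+p*q-1))]
  nlinarith [mul_nonneg h1 h2]

lemma gkey (b nn s t : ℝ) (hb : 0 < b) (hs : 0 ≤ s) (hst : s ≤ t) (htn : t ≤ nn) :
    (2 - exp (-t/b) - exp (-(nn - t)/b)) * (1 - exp (-nn/b))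
      ≤ (2 - exp (-(t-s)/b) - exp (-(nn-(t-s))/b)) * (2 - exp (-s/b) - exp (-(nn-s)/b)) := by
  have hp0 : 0 < exp (-s/b) := exp_pos _
  have hq0 : 0 < exp (-(t-s)/b) := exp_pos _
  have hpq0 : 0 < exp (-s/b) * exp (-(t-s)/b) := mul_pos hp0 hq0
  have hr0 : 0 < exp (-nn/b) := exp_pos _
  have hp1 : exp (-s/b) ≤ 1 :=
    exp_le_one_iff.2 (div_nonpos_of_nonpos_of_nonneg (by linarith) hb.le)
  have hq1 : exp (-(t-s)/b) ≤ 1 :=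
    exp_le_one_iff.2 (div_nonpos_of_nonpos_of_nonneg (by linarith) hb.le)
  have ht : exp (-t/b) = exp (-s/b) * exp (-(t-s)/b) := by
    rw [← exp_add]; ring_nf
  have ha1 : exp (-(nn-t)/b) = exp (-nn/b) / (exp (-s/b) * exp (-(t-s)/b)) := by
    rw [eq_div_iff hpq0.ne', ← exp_add, ← exp_add]; ring_nf
  have ha2 : exp (-(nn-s)/b) = exp (-nn/b) / exp (-s/b) := by
    rw [eq_div_iff hp0.ne', ← exp_add]; ring_nf
  have ha3 : exp (-(nn-(t-s))/b) = exp (-nn/b) / exp (-(t-s)/b) := by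
    rw [eq_div_iff hq0.ne', ← exp_add]; ring_nf
  have hrpq : exp (-nn/b) ≤ exp (-s/b) * exp (-(t-s)/b) := by
    rw [← exp_add]
    apply exp_le_exp.2
    rw [← add_div]
    exact (div_le_div_iff_of_pos_right hb).2 (by linarith)
  have key := poly_key (exp (-s/b)) (exp (-(t-s)/b)) (exp (-nn/b)) hp0 hq0 hr0 hp1 hq1 hrpq
  rw [ht, ha1, ha2, ha3]
  rw [← mul_le_mul_iff_of_pos_right hpq0]
  have c1 : exp (-nn/b) / (exp (-s/b) * exp (-(t-s)/b)) * (exp (-s/b) * exp (-(t-s)/b)) = exp (-nn/b) :=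
    div_mul_cancel₀ _ hpq0.ne'
  have c2 : exp (-nn/b) / exp (-(t-s)/b) * exp (-(t-s)/b) = exp (-nn/b) := div_mul_cancel₀ _ hq0.ne'
  have c3 : exp (-nn/b) / exp (-s/b) * exp (-s/b) = exp (-nn/b) := div_mul_cancel₀ _ hp0.ne'
  have e1 : (2 - exp (-s/b) * exp (-(t-s)/b) - exp (-nn/b) / (exp (-s/b) * exp (-(t-s)/b))) * (1 - exp (-nn/b)) * (exp (-s/b) * exp (-(t-s)/b))
      = (2 * (exp (-s/b) * exp (-(t-s)/b)) - (exp (-s/b) * exp (-(t-s)/b))^2 - exp (-nn/b)) * (1 - exp (-nn/b)) := by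
    linear_combination (exp (-nn/b) - 1) * c1
  have e2 : (2 - exp (-(t-s)/b) - exp (-nn/b) / exp (-(t-s)/b)) * (2 - exp (-s/b) - exp (-nn/b) / exp (-s/b)) * (exp (-s/b) * exp (-(t-s)/b))
      = (2 * exp (-(t-s)/b) - exp (-(t-s)/b)^2 - exp (-nn/b)) * (2 * exp (-s/b) - exp (-s/b)^2 - exp (-nn/b)) := by
    linear_combination (-(2*exp (-s/b) - exp (-s/b)^2 - exp (-nn/b) / exp (-s/b) * exp (-s/b))) * c2 + (-(2*exp (-(t-s)/b) - exp (-(t-s)/b)^2 - exp (-nn/b))) * c3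
  rw [e1, e2]
  exact key

lemma psi_mono (b nn d c : ℝ) (hb : 0 < b) (hdc : d ≤ c) (hcn : c ≤ nn) :
    (2 - exp (-d/b) - exp (-(nn-d)/b)) * exp (d/b)
      ≤ (2 - exp (-c/b) - exp (-(nn-c)/b)) * exp (c/b) := by
  have i1 : exp (-d/b) * exp (d/b) = 1 := by rw [← exp_add]; ring_nf; exact exp_zero
  have i1' : exp (-c/b) * exp (c/b) = 1 := by rw [← exp_add]; ring_nf; exact exp_zero
  have i2 : exp (-(nn-d)/b) * exp (d/b) = exp (-nn/b) * (exp (d/b) * exp (d/b)) := by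
    rw [← exp_add, ← exp_add, ← exp_add]; ring_nf
  have i2' : exp (-(nn-c)/b) * exp (c/b) = exp (-nn/b) * (exp (c/b) * exp (c/b)) := by
    rw [← exp_add, ← exp_add, ← exp_add]; ring_nf
  have hEF : exp (d/b) ≤ exp (c/b) := exp_le_exp.2 ((div_le_div_iff_of_pos_right hb).2 hdc)
  have hrE : exp (-nn/b) * exp (c/b) ≤ 1 := by
    rw [← exp_add]
    apply exp_le_one_iff.2
    rw [← add_div]
    exact div_nonpos_of_nonpos_of_nonneg (by linarith) hb.le
  have hrF : exp (-nn/b) * exp (d/b) ≤ 1 := by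
    rw [← exp_add]
    apply exp_le_one_iff.2
    rw [← add_div]
    exact div_nonpos_of_nonpos_of_nonneg (by linarith) hb.le
  nlinarith [mul_nonneg (sub_nonneg.2 hEF)
    (by linarith : (0:ℝ) ≤ 2 - exp (-nn/b) * exp (c/b) - exp (-nn/b) * exp (d/b))]

lemma gpos (b nn lam : ℝ) (hb : 0 < b) (hnn : 0 < nn) (h0 : 0 ≤ lam) (hn : lam ≤ nn) :
    0 < 2 - exp (-lam/b) - exp (-(nn-lam)/b) := by
  have hu : exp (-lam/b) ≤ 1 :=
    exp_le_one_iff.2 (div_nonpos_of_nonpos_of_nonneg (by linarith) hb.le)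
  have hv : exp (-(nn-lam)/b) ≤ 1 :=
    exp_le_one_iff.2 (div_nonpos_of_nonpos_of_nonneg (by linarith) hb.le)
  have huv : exp (-lam/b) * exp (-(nn-lam)/b) < 1 := by
    rw [← exp_add]
    apply exp_lt_one_iff.2
    rw [← add_div]
    exact div_neg_of_neg_of_pos (by linarith) hb
  nlinarith [mul_nonneg (sub_nonneg.2 hu) (sub_nonneg.2 hv)]

lemma density_ratio (b nn c lam lam' x : ℝ) (hb : 0 < b) (hnn : 0 < nn)
    (h0 : 0 ≤ lam) (h1 : lam ≤ nn) (h0' : 0 ≤ lam') (h1' : lam' ≤ nn)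
    (hd : |lam - lam'| ≤ c) (hc : c ≤ nn) :
    (2 - exp (-lam'/b) - exp (-(nn-lam')/b)) * (1 - exp (-nn/b)) * exp (-|x - lam|/b)
      ≤ (2 - exp (-c/b) - exp (-(nn-c)/b)) * exp (c/b)
        * ((2 - exp (-lam/b) - exp (-(nn-lam)/b)) * exp (-|x - lam'|/b)) := by
  set d := |lam - lam'| with hdd
  have hd0 : 0 ≤ d := abs_nonneg _
  have stepa : exp (-|x - lam|/b) ≤ exp (d/b) * exp (-|x - lam'|/b) := by
    rw [← exp_add, ← add_div]
    apply exp_le_exp.2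
    apply (div_le_div_iff_of_pos_right hb).2
    have h := abs_sub_abs_le_abs_sub (x - lam') (x - lam)
    rw [show x - lam' - (x - lam) = lam - lam' from by ring] at h
    linarith
  have stepb : (2 - exp (-lam'/b) - exp (-(nn-lam')/b)) * (1 - exp (-nn/b))
      ≤ (2 - exp (-d/b) - exp (-(nn-d)/b)) * (2 - exp (-lam/b) - exp (-(nn-lam)/b)) := by
    rcases le_total lam lam' with h | h
    · have hde : d = lam' - lam := by rw [hdd, abs_sub_comm, abs_of_nonneg (by linarith)]
      have := gkey b nn lam lam' hb h0 h h1'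
      rw [hde]
      ring_nf at this ⊢
      linarith
    · have hde : d = lam - lam' := by rw [hdd, abs_of_nonneg (by linarith)]
      have := gkey b nn (nn - lam) (nn - lam') hb (by linarith) (by linarith) (by linarith)
      rw [show nn - (nn - lam') = lam' from by ring,
        show nn - lam' - (nn - lam) = lam - lam' from by ring,
        show nn - (lam - lam') = nn - lam + lam' from by ring,
        show nn - (nn - lam) = lam from by ring] at this
      rw [hde, show nn - (lam - lam') = nn - lam + lam' from by ring]
      ring_nf at this ⊢
      linarith
  have stepc : (2 - exp (-d/b) - exp (-(nn-d)/b)) * exp (d/b)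
      ≤ (2 - exp (-c/b) - exp (-(nn-c)/b)) * exp (c/b) := psi_mono b nn d c hb hd hc
  have hgl : 0 ≤ 2 - exp (-lam/b) - exp (-(nn-lam)/b) := (gpos b nn lam hb hnn h0 h1).le
  have hgl' : 0 ≤ 2 - exp (-lam'/b) - exp (-(nn-lam')/b) := (gpos b nn lam' hb hnn h0' h1').le
  have hr1 : 0 ≤ 1 - exp (-nn/b) := by
    have : exp (-nn/b) ≤ 1 :=
      exp_le_one_iff.2 (div_nonpos_of_nonpos_of_nonneg (by linarith) hb.le)
    linarith
  calc (2 - exp (-lam'/b) - exp (-(nn-lam')/b)) * (1 - exp (-nn/b)) * exp (-|x - lam|/b)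
      ≤ (2 - exp (-lam'/b) - exp (-(nn-lam')/b)) * (1 - exp (-nn/b)) * (exp (d/b) * exp (-|x - lam'|/b)) :=
        mul_le_mul_of_nonneg_left stepa (mul_nonneg hgl' hr1)
    _ = (2 - exp (-lam'/b) - exp (-(nn-lam')/b)) * (1 - exp (-nn/b)) * exp (d/b) * exp (-|x - lam'|/b) := by ring
    _ ≤ (2 - exp (-d/b) - exp (-(nn-d)/b)) * (2 - exp (-lam/b) - exp (-(nn-lam)/b)) * exp (d/b) * exp (-|x - lam'|/b) := by
        apply mul_le_mul_of_nonneg_right (mul_le_mul_of_nonneg_right stepb (exp_pos _).le) (exp_pos _).le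
    _ = ((2 - exp (-d/b) - exp (-(nn-d)/b)) * exp (d/b)) * ((2 - exp (-lam/b) - exp (-(nn-lam)/b)) * exp (-|x - lam'|/b)) := by ring
    _ ≤ ((2 - exp (-c/b) - exp (-(nn-c)/b)) * exp (c/b)) * ((2 - exp (-lam/b) - exp (-(nn-lam)/b)) * exp (-|x - lam'|/b)) :=
        mul_le_mul_of_nonneg_right stepc (mul_nonneg hgl (exp_pos _).le)

lemma Cnorm_eq (n : ℕ) (lam b : ℝ) (hb : 0 < b) (h0 : 0 ≤ lam) (hn : lam ≤ n) :
    Cnorm n lam b = (2 - exp (-lam/b) - exp (-((n:ℝ)-lam)/b)) / 2 := by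
  have hcont : Continuous fun x : ℝ => (1 / (2 * b)) * exp (-|x - lam| / b) := by
    fun_prop
  have hsplit := intervalIntegral.integral_add_adjacent_intervals
    (a := (0:ℝ)) (b := lam) (c := (n:ℝ))
    (f := fun x : ℝ => (1 / (2 * b)) * exp (-|x - lam| / b))
    (hcont.intervalIntegrable (μ := volume) _ _) (hcont.intervalIntegrable (μ := volume) _ _)
  have part1 : (∫ x in (0:ℝ)..lam, (1 / (2 * b)) * exp (-|x - lam| / b))
      = 1/2 - (1/2) * exp (-lam/b) := by
    have congr1 : (∫ x in (0:ℝ)..lam, (1 / (2 * b)) * exp (-|x - lam| / b))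
        = ∫ x in (0:ℝ)..lam, (1 / (2 * b)) * exp ((x - lam) / b) := by
      apply intervalIntegral.integral_congr
      intro x hx
      rw [Set.uIcc_of_le h0] at hx
      show 1 / (2 * b) * exp (-|x - lam| / b) = 1 / (2 * b) * exp ((x - lam) / b)
      rw [abs_of_nonpos (by linarith [hx.2] : x - lam ≤ 0), neg_neg]
    rw [congr1]
    have hderiv : ∀ x ∈ Set.uIcc (0:ℝ) lam,
        HasDerivAt (fun y => (1/2) * exp ((y - lam) / b))
          ((1 / (2 * b)) * exp ((x - lam) / b)) x := by
      intro x _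
      have h := (((hasDerivAt_id x).sub_const lam).div_const b).exp.const_mul (1/2 : ℝ)
      refine h.congr_deriv ?_
      simp only [id_eq]
      try ring
    rw [intervalIntegral.integral_eq_sub_of_hasDerivAt hderiv
      ((by fun_prop : Continuous fun x : ℝ => (1 / (2 * b)) * exp ((x - lam) / b)).intervalIntegrable (μ := volume) _ _)]
    simp
    try ring_nf
  have part2 : (∫ x in lam..(n:ℝ), (1 / (2 * b)) * exp (-|x - lam| / b))
      = 1/2 - (1/2) * exp (-((n:ℝ)-lam)/b) := by
    have congr2 : (∫ x in lam..(n:ℝ), (1 / (2 * b)) * exp (-|x - lam| / b))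
        = ∫ x in lam..(n:ℝ), (1 / (2 * b)) * exp (-(x - lam) / b) := by
      apply intervalIntegral.integral_congr
      intro x hx
      rw [Set.uIcc_of_le hn] at hx
      show 1 / (2 * b) * exp (-|x - lam| / b) = 1 / (2 * b) * exp (-(x - lam) / b)
      rw [abs_of_nonneg (by linarith [hx.1] : (0:ℝ) ≤ x - lam)]
    rw [congr2]
    have hderiv : ∀ x ∈ Set.uIcc lam (n:ℝ),
        HasDerivAt (fun y => -(1/2) * exp (-(y - lam) / b))
          ((1 / (2 * b)) * exp (-(x - lam) / b)) x := by
      intro x _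
      have h := ((((hasDerivAt_id x).sub_const lam).neg.div_const b).exp.const_mul (-(1/2) : ℝ))
      refine h.congr_deriv ?_
      simp only [id_eq, Pi.neg_apply]
      try ring
    rw [intervalIntegral.integral_eq_sub_of_hasDerivAt hderiv
      ((by fun_prop : Continuous fun x : ℝ => (1 / (2 * b)) * exp (-(x - lam) / b)).intervalIntegrable (μ := volume) _ _)]
    simp
    try ring_nf
  rw [Cnorm, ← hsplit, part1, part2]
  ring_nf


lemma div_form (G G' R P Q1 Q2 b : ℝ) (hb : 0 < b) (hG : 0 < G) (hG' : 0 < G')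
    (hR : 0 < R) (h : G' * R * Q1 ≤ P * (G * Q2)) :
    (1 / (2 * b * (G / 2))) * Q1 ≤ (P / R) * ((1 / (2 * b * (G' / 2))) * Q2) := by
  rw [show (1 / (2 * b * (G / 2))) * Q1 = Q1 / (b * G) from by field_simp,
    show (P / R) * ((1 / (2 * b * (G' / 2))) * Q2) = (P * Q2) / (R * (b * G')) from by
      field_simp,
    div_le_div_iff₀ (by positivity) (by positivity)]
  nlinarith [mul_le_mul_of_nonneg_left h hb.le]

lemma boundedLaplace_mass (n : ℕ) (lam b : ℝ) (hb : 0 < b) (hnn : 0 < (n:ℝ))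
    (h0 : 0 ≤ lam) (hn : lam ≤ (n:ℝ))
    (hC : 0 < Cnorm n lam b) :
    boundedLaplace n lam b Set.univ = 1 := by
  rw [boundedLaplace, withDensity_apply _ MeasurableSet.univ, Measure.restrict_univ]
  rw [show (fun x : ℝ => if x ∈ Set.Icc (0 : ℝ) (n : ℝ) then
        ENNReal.ofReal ((1 / (2 * b * Cnorm n lam b)) * Real.exp (-|x - lam| / b))
      else 0)
    = fun x => (Set.Icc (0 : ℝ) (n : ℝ)).indicator (fun x =>
        ENNReal.ofReal ((1 / (2 * b * Cnorm n lam b)) * Real.exp (-|x - lam| / b))) x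
    from funext fun x => by by_cases h : x ∈ Set.Icc (0:ℝ) (n:ℝ) <;> simp [h]]
  rw [lintegral_indicator measurableSet_Icc]
  have hcont : Continuous fun x : ℝ =>
      (1 / (2 * b * Cnorm n lam b)) * Real.exp (-|x - lam| / b) := by fun_prop
  rw [← ofReal_integral_eq_lintegral_ofReal (hcont.integrableOn_Icc)
    (Filter.Eventually.of_forall fun x => by positivity)]
  have hfact : ∀ x : ℝ, (1 / (2 * b * Cnorm n lam b)) * Real.exp (-|x - lam| / b)
      = (1 / Cnorm n lam b) * ((1 / (2 * b)) * Real.exp (-|x - lam| / b)) := by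
    intro x; field_simp
  have : (∫ x in Set.Icc (0:ℝ) (n:ℝ), (1 / (2 * b * Cnorm n lam b)) * Real.exp (-|x - lam| / b))
      = (1 / Cnorm n lam b) * Cnorm n lam b := by
    rw [MeasureTheory.integral_Icc_eq_integral_Ioc,
      ← intervalIntegral.integral_of_le hnn.le]
    simp only [hfact]
    rw [intervalIntegral.integral_const_mul, Cnorm]
  rw [this, one_div_mul_cancel hC.ne', ENNReal.ofReal_one]


/-- Edge differential privacy of the bounded Laplace mechanism: if
`b ≥ 2A / (ε − log ΔC(b) − log(1 − δ))`, where
`ΔC(b) = (2 − e^{−2A/b} − e^{−(n−2A)/b})/(1 − e^{−n/b})`, then for any `λ, λ' ∈ [0, n]`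
with `|λ − λ'| ≤ 2A` (in particular for corresponding Laplacian eigenvalues of two
`A`-edge-adjacent graphs on `n` vertices), and any Borel `S ⊆ ℝ`,
`μ_{λ,b}(S) ≤ e^ε μ_{λ',b}(S) + δ`. -/
theorem bounded_laplace_edge_dp (ε δ : ℝ) (hε : 0 < ε) (hδ : δ ∈ Set.Ioo (0 : ℝ) 1)
    (n A : ℕ) (hA : 0 < 2 * A) (hAn : 2 * A ≤ n) (b : ℝ) (hb : 0 < b)
    (hpos : 0 < ε - Real.log ((2 - Real.exp (-(2 * A : ℝ) / b)
        - Real.exp (-((n : ℝ) - 2 * A) / b)) / (1 - Real.exp (-(n : ℝ) / b)))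
      - Real.log (1 - δ))
    (hbge : (2 * A : ℝ) / (ε - Real.log ((2 - Real.exp (-(2 * A : ℝ) / b)
        - Real.exp (-((n : ℝ) - 2 * A) / b)) / (1 - Real.exp (-(n : ℝ) / b)))
      - Real.log (1 - δ)) ≤ b)
    (lam lam' : ℝ) (hlam : lam ∈ Set.Icc (0 : ℝ) (n : ℝ))
    (hlam' : lam' ∈ Set.Icc (0 : ℝ) (n : ℝ)) (hdiff : |lam - lam'| ≤ 2 * A)
    (S : Set ℝ) (hS : MeasurableSet S) :
    boundedLaplace n lam b S
      ≤ ENNReal.ofReal (Real.exp ε) * boundedLaplace n lam' b S + ENNReal.ofReal δ := by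
  have hδ0 : 0 < δ := hδ.1
  have h1δ : 0 < 1 - δ := by linarith [hδ.2]
  have hA0 : (0:ℝ) < 2 * A := by exact_mod_cast hA
  have hcn : (2 * (A:ℝ)) ≤ (n:ℝ) := by exact_mod_cast hAn
  have hnn : (0:ℝ) < (n:ℝ) := lt_of_lt_of_le hA0 hcn
  have hΔnum : 0 < 2 - exp (-(2 * (A:ℝ))/b) - exp (-((n:ℝ) - 2 * (A:ℝ))/b) :=
    gpos b (n:ℝ) (2 * (A:ℝ)) hb hnn hA0.le hcn
  have hg0 : 0 < 1 - exp (-(n:ℝ)/b) := by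
    have : exp (-(n:ℝ)/b) < 1 := exp_lt_one_iff.2 (div_neg_of_neg_of_pos (by linarith) hb)
    linarith
  set Δ : ℝ := (2 - Real.exp (-(2 * A : ℝ) / b)
      - Real.exp (-((n : ℝ) - 2 * A) / b)) / (1 - Real.exp (-(n : ℝ) / b)) with hΔdef
  have hΔpos : 0 < Δ := div_pos hΔnum hg0
  -- exponent bound
  have hexps : (2 * (A:ℝ))/b ≤ ε - Real.log Δ - Real.log (1 - δ) := by
    rw [div_le_iff₀ hb]
    have h2A : (2 * (A:ℝ)) ≤ b * (ε - Real.log Δ - Real.log (1 - δ)) := by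
      have := (div_le_iff₀ hpos).1 hbge
      linarith [this]
    linarith [h2A]
  set K : ℝ := Δ * exp ((2 * (A:ℝ))/b) with hKdef
  have hK0 : 0 ≤ K := by positivity
  have hK : K ≤ exp ε / (1 - δ) := by
    have h1 : K ≤ Δ * exp (ε - Real.log Δ - Real.log (1 - δ)) :=
      mul_le_mul_of_nonneg_left (exp_le_exp.2 hexps) hΔpos.le
    have h2 : exp (ε - Real.log Δ - Real.log (1 - δ)) = exp ε / Δ / (1 - δ) := by
      rw [exp_sub, exp_sub, exp_log hΔpos, exp_log h1δ]
    rw [h2] at h1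
    have h3 : Δ * (exp ε / Δ / (1 - δ)) = exp ε / (1 - δ) := by
      field_simp
    linarith [h3 ▸ h1]
  -- Cnorm values and positivity
  have hgl : 0 < 2 - exp (-lam/b) - exp (-((n:ℝ) - lam)/b) :=
    gpos b (n:ℝ) lam hb hnn hlam.1 hlam.2
  have hgl' : 0 < 2 - exp (-lam'/b) - exp (-((n:ℝ) - lam')/b) :=
    gpos b (n:ℝ) lam' hb hnn hlam'.1 hlam'.2
  have hCl : Cnorm n lam b = (2 - exp (-lam/b) - exp (-((n:ℝ) - lam)/b)) / 2 :=
    Cnorm_eq n lam b hb hlam.1 hlam.2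
  have hCl' : Cnorm n lam' b = (2 - exp (-lam'/b) - exp (-((n:ℝ) - lam')/b)) / 2 :=
    Cnorm_eq n lam' b hb hlam'.1 hlam'.2
  have hClpos : 0 < Cnorm n lam b := by rw [hCl]; linarith
  have hClpos' : 0 < Cnorm n lam' b := by rw [hCl']; linarith
  -- pointwise density inequality
  have hptreal : ∀ x : ℝ, (1 / (2 * b * Cnorm n lam b)) * exp (-|x - lam| / b)
      ≤ K * ((1 / (2 * b * Cnorm n lam' b)) * exp (-|x - lam'| / b)) := by
    intro x
    have base := density_ratio b (n:ℝ) (2 * (A:ℝ)) lam lam' x hb hnn hlam.1 hlam.2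
      hlam'.1 hlam'.2 hdiff hcn
    have hKP : K = ((2 - exp (-(2 * (A:ℝ))/b) - exp (-((n:ℝ) - 2 * (A:ℝ))/b))
        * exp ((2 * (A:ℝ))/b)) / (1 - exp (-(n:ℝ)/b)) := by
      rw [hKdef, hΔdef]; ring
    rw [hCl, hCl', hKP]
    exact div_form _ _ _ _ _ _ b hb hgl hgl' hg0 base
  -- measure comparison
  have h1 : boundedLaplace n lam b S
      ≤ ENNReal.ofReal K * boundedLaplace n lam' b S := by
    rw [boundedLaplace, boundedLaplace, withDensity_apply _ hS, withDensity_apply _ hS,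
      ← lintegral_const_mul' _ _ ENNReal.ofReal_ne_top]
    apply lintegral_mono
    intro x
    by_cases hx : x ∈ Set.Icc (0:ℝ) (n:ℝ)
    · simp only [hx, if_true]
      rw [← ENNReal.ofReal_mul hK0]
      exact ENNReal.ofReal_le_ofReal (hptreal x)
    · simp [hx]
  have h2 : boundedLaplace n lam b S ≤ 1 :=
    (measure_mono (Set.subset_univ S)).trans
      (boundedLaplace_mass n lam b hb hnn hlam.1 hlam.2 hClpos).le
  have h3 : boundedLaplace n lam' b S ≤ 1 :=
    (measure_mono (Set.subset_univ S)).trans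
      (boundedLaplace_mass n lam' b hb hnn hlam'.1 hlam'.2 hClpos').le
  -- endgame in ℝ
  have hfin' : boundedLaplace n lam' b S ≠ ⊤ := (lt_of_le_of_lt h3 ENNReal.one_lt_top).ne
  have hfin : boundedLaplace n lam b S ≠ ⊤ := (lt_of_le_of_lt h2 ENNReal.one_lt_top).ne
  set m : ℝ := (boundedLaplace n lam' b S).toReal with hmdef
  have hm0 : 0 ≤ m := ENNReal.toReal_nonneg
  have hmeq : boundedLaplace n lam' b S = ENNReal.ofReal m := (ENNReal.ofReal_toReal hfin').symm
  have ha : (boundedLaplace n lam b S).toReal ≤ K * m := by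
    have hne : ENNReal.ofReal K * boundedLaplace n lam' b S ≠ ⊤ :=
      ENNReal.mul_ne_top ENNReal.ofReal_ne_top hfin'
    have := ENNReal.toReal_mono hne h1
    rwa [ENNReal.toReal_mul, ENNReal.toReal_ofReal hK0] at this
  have ha1 : (boundedLaplace n lam b S).toReal ≤ 1 := by
    simpa using ENNReal.toReal_mono ENNReal.one_ne_top h2
  have hreal : (boundedLaplace n lam b S).toReal ≤ exp ε * m + δ := by
    rcases le_or_gt 1 (exp ε * m + δ) with h | h
    · linarith
    · have hKm : K * m ≤ (exp ε / (1 - δ)) * m := mul_le_mul_of_nonneg_right hK hm0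
      have hdm : (exp ε / (1 - δ)) * m ≤ exp ε * m + δ := by
        rw [div_mul_eq_mul_div, div_le_iff₀ h1δ]
        nlinarith [mul_nonneg hδ0.le (by linarith : (0:ℝ) ≤ 1 - δ - exp ε * m)]
      linarith
  calc boundedLaplace n lam b S
      = ENNReal.ofReal ((boundedLaplace n lam b S).toReal) :=
        (ENNReal.ofReal_toReal hfin).symm
    _ ≤ ENNReal.ofReal (exp ε * m + δ) := ENNReal.ofReal_le_ofReal hreal
    _ = ENNReal.ofReal (exp ε * m) + ENNReal.ofReal δ :=
        ENNReal.ofReal_add (by positivity) hδ0.le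
    _ = ENNReal.ofReal (exp ε) * ENNReal.ofReal m + ENNReal.ofReal δ := by
        rw [ENNReal.ofReal_mul (exp_pos ε).le]
    _ = ENNReal.ofReal (Real.exp ε) * boundedLaplace n lam' b S + ENNReal.ofReal δ := by
        rw [hmeq]
end

section
/- For every n ∈ ℕ with n ≥ 1, every λ ∈ [0, n], and every b > 0, one has ∫_0^n x · e^{−|x−λ|/b} dx = b · (2λ + b·e^{−λ/b} − (n + b)·e^{−(n−λ)/b}). Consequently, the mean of the bounded Laplace distribution μ_{λ,b} is ∫ x dμ_{λ,b}(x) = (1/(2·C(λ, b))) · (2λ + b·e^{−λ/b} − (n + b)·e^{−(n−λ)/b}). -/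
open MeasureTheory
open scoped ENNReal NNReal

lemma deriv1 (lam b : ℝ) (hb : b ≠ 0) (x : ℝ) :
    HasDerivAt (fun x => b * (x - b) * Real.exp ((x - lam) / b))
      (x * Real.exp ((x - lam) / b)) x := by
  have h1 : HasDerivAt (fun x : ℝ => b * (x - b)) b x := by
    simpa using ((hasDerivAt_id x).sub_const b).const_mul b
  have h2 : HasDerivAt (fun x : ℝ => Real.exp ((x - lam) / b)) (Real.exp ((x - lam) / b) * (1/b)) x := by
    have : HasDerivAt (fun x : ℝ => (x - lam) / b) (1/b) x := by
      simpa using ((hasDerivAt_id x).sub_const lam).div_const b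
    exact this.exp
  have := h1.mul h2
  refine this.congr_deriv ?_
  field_simp
  ring

lemma deriv2 (lam b : ℝ) (hb : b ≠ 0) (x : ℝ) :
    HasDerivAt (fun x => -(b * (x + b)) * Real.exp ((lam - x) / b))
      (x * Real.exp ((lam - x) / b)) x := by
  have h1 : HasDerivAt (fun x : ℝ => -(b * (x + b))) (-b) x := by
    exact (((hasDerivAt_id x).add_const b).const_mul b).neg.congr_deriv (by ring)
  have h2 : HasDerivAt (fun x : ℝ => Real.exp ((lam - x) / b)) (Real.exp ((lam - x) / b) * (-1/b)) x := by
    have : HasDerivAt (fun x : ℝ => (lam - x) / b) (-1/b) x := by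
      simpa using ((hasDerivAt_id x).const_sub lam).div_const b
    exact this.exp
  have := h1.mul h2
  refine this.congr_deriv ?_
  field_simp
  ring

/-- The first-moment integral of the bounded Laplace density:
`∫_0^n x e^{−|x−λ|/b} dx = b(2λ + b e^{−λ/b} − (n+b) e^{−(n−λ)/b})`, and consequently
the mean of the bounded Laplace distribution is
`(1/(2C(λ,b)))(2λ + b e^{−λ/b} − (n+b) e^{−(n−λ)/b})`. -/
theorem bounded_laplace_mean (n : ℕ) (hn : 1 ≤ n) (lam b : ℝ)
    (hlam : lam ∈ Set.Icc (0 : ℝ) (n : ℝ)) (hb : 0 < b) :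
    (∫ x in (0 : ℝ)..(n : ℝ), x * Real.exp (-|x - lam| / b)
        = b * (2 * lam + b * Real.exp (-lam / b)
          - ((n : ℝ) + b) * Real.exp (-((n : ℝ) - lam) / b))) ∧
      (∫ x, x ∂(boundedLaplace n lam b)
        = (1 / (2 * Cnorm n lam b)) * (2 * lam + b * Real.exp (-lam / b)
          - ((n : ℝ) + b) * Real.exp (-((n : ℝ) - lam) / b))) := by
  obtain ⟨h0, h1⟩ := hlam
  have hb' : b ≠ 0 := ne_of_gt hb
  have hcont : Continuous fun x : ℝ => x * Real.exp (-|x - lam| / b) := by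
    fun_prop
  have key : ∫ x in (0 : ℝ)..(n : ℝ), x * Real.exp (-|x - lam| / b)
      = b * (2 * lam + b * Real.exp (-lam / b)
        - ((n : ℝ) + b) * Real.exp (-((n : ℝ) - lam) / b)) := by
    have hsplit : (∫ x in (0:ℝ)..lam, x * Real.exp (-|x - lam| / b))
        + ∫ x in lam..(n:ℝ), x * Real.exp (-|x - lam| / b)
        = ∫ x in (0:ℝ)..(n:ℝ), x * Real.exp (-|x - lam| / b) :=
      intervalIntegral.integral_add_adjacent_intervals
        (hcont.intervalIntegrable _ _) (hcont.intervalIntegrable _ _)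
    have e1 : (∫ x in (0:ℝ)..lam, x * Real.exp (-|x - lam| / b))
        = ∫ x in (0:ℝ)..lam, x * Real.exp ((x - lam) / b) := by
      apply intervalIntegral.integral_congr
      intro x hx
      rw [Set.uIcc_of_le h0] at hx
      have : |x - lam| = lam - x := by
        rw [abs_of_nonpos (by linarith [hx.2])]; ring
      dsimp only
      rw [this]; ring_nf
    have e2 : (∫ x in lam..(n:ℝ), x * Real.exp (-|x - lam| / b))
        = ∫ x in lam..(n:ℝ), x * Real.exp ((lam - x) / b) := by
      apply intervalIntegral.integral_congr
      intro x hx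
      rw [Set.uIcc_of_le h1] at hx
      have : |x - lam| = x - lam := abs_of_nonneg (by linarith [hx.1])
      dsimp only
      rw [this]; ring_nf
    have v1 : (∫ x in (0:ℝ)..lam, x * Real.exp ((x - lam) / b))
        = b * (lam - b) * Real.exp ((lam - lam)/b) - b * (0 - b) * Real.exp ((0 - lam)/b) := by
      apply intervalIntegral.integral_eq_sub_of_hasDerivAt (f := fun x => b * (x - b) * Real.exp ((x - lam) / b))
      · intro x _; exact deriv1 lam b hb' x
      · exact (by fun_prop : Continuous fun x : ℝ => x * Real.exp ((x - lam)/b)).intervalIntegrable _ _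
    have v2 : (∫ x in lam..(n:ℝ), x * Real.exp ((lam - x) / b))
        = -(b * ((n:ℝ) + b)) * Real.exp ((lam - (n:ℝ))/b) - -(b * (lam + b)) * Real.exp ((lam - lam)/b) := by
      apply intervalIntegral.integral_eq_sub_of_hasDerivAt (f := fun x => -(b * (x + b)) * Real.exp ((lam - x) / b))
      · intro x _; exact deriv2 lam b hb' x
      · exact (by fun_prop : Continuous fun x : ℝ => x * Real.exp ((lam - x)/b)).intervalIntegrable _ _
    rw [← hsplit, e1, e2, v1, v2]
    have a1 : (lam - lam)/b = 0 := by rw [sub_self, zero_div]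
    have a2 : (0 - lam)/b = -lam/b := by ring
    have a3 : (lam - (n:ℝ))/b = -((n:ℝ) - lam)/b := by ring
    rw [a1, a2, a3, Real.exp_zero]
    ring
  refine ⟨key, ?_⟩
  -- part 2
  set C := Cnorm n lam b with hC
  set c := 1 / (2 * b * C) with hc
  have hCnonneg : 0 ≤ C := by
    rw [hC, Cnorm]
    apply intervalIntegral.integral_nonneg (by exact_mod_cast Nat.zero_le n)
    intro x _
    positivity
  have hcnn : 0 ≤ c := by
    rw [hc]; positivity
  set g : ℝ → ℝ := fun x => Set.indicator (Set.Icc (0:ℝ) (n:ℝ))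
    (fun x => c * Real.exp (-|x - lam| / b)) x with hg
  have hgnn : ∀ x, 0 ≤ g x := by
    intro x
    apply Set.indicator_nonneg
    intro x _
    positivity
  have hgmeas : Measurable fun x => Real.toNNReal (g x) := by
    apply Measurable.real_toNNReal
    apply Measurable.indicator _ measurableSet_Icc
    fun_prop
  have hmeq : boundedLaplace n lam b
      = volume.withDensity (fun x => (Real.toNNReal (g x) : ℝ≥0∞)) := by
    rw [boundedLaplace]
    congr 1
    funext x
    by_cases hx : x ∈ Set.Icc (0:ℝ) (n:ℝ)
    · rw [if_pos hx, hg]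
      simp only [Set.indicator_of_mem hx]
      rfl
    · simp [hg, Set.indicator_of_notMem hx, hx]
  rw [hmeq, integral_withDensity_eq_integral_smul hgmeas]
  have : (fun x : ℝ => Real.toNNReal (g x) • x) = fun x : ℝ =>
      Set.indicator (Set.Icc (0:ℝ) (n:ℝ)) (fun x => c * (x * Real.exp (-|x - lam| / b))) x := by
    funext x
    have : (Real.toNNReal (g x) : ℝ) = g x := Real.coe_toNNReal _ (hgnn x)
    rw [NNReal.smul_def, smul_eq_mul, this]
    by_cases hx : x ∈ Set.Icc (0:ℝ) (n:ℝ)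
    · simp [hg, Set.indicator_of_mem hx]; ring
    · simp [hg, Set.indicator_of_notMem hx]
  rw [this, integral_indicator measurableSet_Icc]
  rw [MeasureTheory.integral_Icc_eq_integral_Ioc,
    ← intervalIntegral.integral_of_le (by exact_mod_cast Nat.zero_le n)]
  rw [intervalIntegral.integral_const_mul, key]
  rw [hc]
  by_cases hC0 : C = 0
  · simp [hC0]
  · field_simp
end
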